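/- Let < be any strict linear order on M₀ such that (M₀, <) is ultrahomogeneous and every E₁-class of M₀ is convex with respect to <. Then the six-element ordered structure B embeds into (M₀, <), where B = {a₁ < a₂ < a₃ < a₄ < b₁ < b₂} satisfies: all six elements lie in pairwise distinct E₁-classes; the pairs {a₁, a₂} and {b₁, b₂} are E₂-equivalent; all other pairs of distinct two-element subsets of B are E₂-inequivalent; and for each k ∈ {3, 4, 5} all k-element subsets of B are E_k-equivalent. -/

import Mathlib

open FirstOrder Language Structure CategoryTheory

/-- The language `L₀` with a `2n`-ary relation symbol `E_n` for each `n ≥ 1`. -/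
def L₀ : FirstOrder.Language where
  Functions := fun _ => Empty
  Relations := fun k => {n : ℕ // 0 < n ∧ k = n + n}

/-- The relation symbol `E_n`. -/
def Esymb (n : ℕ) (hn : 0 < n) : L₀.Relations (n + n) := ⟨n, hn, rfl⟩

/-- `E_n(x̄, ȳ)` in an `L₀`-structure. -/
def ERel (M : Type*) [L₀.Structure M] (n : ℕ) (hn : 0 < n) (x y : Fin n → M) : Prop :=
  Structure.RelMap (Esymb n hn) (Fin.append x y)

/-- The defining conditions for membership in `K₀`: each `E_n` holds only on pairs of
injective `n`-tuples, is invariant under permuting the entries of each tuple separately,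
and induces an equivalence relation on `n`-element subsets. -/
def IsK0Struct (C : Type*) [L₀.Structure C] : Prop :=
  ∀ (n : ℕ) (hn : 0 < n),
    (∀ x y : Fin n → C, ERel C n hn x y → Function.Injective x ∧ Function.Injective y) ∧
    (∀ (x y : Fin n → C) (σ τ : Equiv.Perm (Fin n)),
        ERel C n hn x y → ERel C n hn (x ∘ σ) (y ∘ τ)) ∧
    (∀ x : Fin n → C, Function.Injective x → ERel C n hn x x) ∧
    (∀ x y : Fin n → C, ERel C n hn x y → ERel C n hn y x) ∧
    (∀ x y z : Fin n → C, ERel C n hn x y → ERel C n hn y z → ERel C n hn x z)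

/-- The class `K₀` of finite `L₀`-structures as above. -/
def K₀ : Set (Bundled L₀.Structure) := {C | Finite C ∧ IsK0Struct C}

/-- A language with a single binary relation symbol (for a linear order). -/
def Lord : FirstOrder.Language where
  Functions := fun _ => Empty
  Relations := fun k => PLift (k = 2)

/-- Interpret the binary relation symbol of `Lord` by a given relation `r`. -/
def ordStructure (M : Type*) (r : M → M → Prop) : Lord.Structure M where
  funMap := fun f => f.elim
  RelMap := fun {k} R v => r (v (Fin.cast R.down.symm 0)) (v (Fin.cast R.down.symm 1))

/-- The language of `L₀` together with one extra binary relation symbol `<`. -/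
abbrev L₀lt : FirstOrder.Language := L₀.sum Lord

/-- The expansion of an `L₀`-structure by the binary relation `r`. -/
def expStr (M : Type*) [L₀.Structure M] (r : M → M → Prop) : L₀lt.Structure M :=
  @Language.sumStructure L₀ Lord M _ (ordStructure M r)

/-- The Ramsey property for a class `K` of finite structures: for all `A, B ∈ K` and
`k ≥ 1` there is `C ∈ K` such that every `k`-coloring of the copies of `A` in `C` is
monochromatic on the copies of `A` inside some copy `B'` of `B` in `C`. -/
def RamseyProperty {L : FirstOrder.Language} (K : Set (Bundled L.Structure)) : Prop :=
  ∀ A B : Bundled L.Structure, A ∈ K → B ∈ K → ∀ k : ℕ, 0 < k →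
    ∃ C : Bundled L.Structure, C ∈ K ∧
      ∀ χ : {S : L.Substructure C // Nonempty (S ≃[L] A)} → Fin k,
        ∃ B' : L.Substructure C, Nonempty (B' ≃[L] B) ∧
          ∀ S T : {S : L.Substructure C // Nonempty (S ≃[L] A)},
            S.1 ≤ B' → T.1 ≤ B' → χ S = χ T

/-! ### Auxiliary finite witness structure -/

/-- Carrier of the auxiliary finite structure: for each permutation `σ` of the six
`E₁`-classes a gadget of four points, plus one filler point in each class. -/
abbrev VB : Type := (Equiv.Perm (Fin 6) × Fin 4) ⊕ Fin 6

/-- Positions of the gadget points among the six classes. -/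
def posB : Fin 4 → Fin 6
  | 0 => 0
  | 1 => 1
  | 2 => 4
  | 3 => 5

/-- The `E₁`-class of an element of `VB`. -/
def clsB : VB → Fin 6
  | .inl p => p.1 (posB p.2)
  | .inr i => i

/-- The low linked pair of a gadget. -/
def lowB (σ : Equiv.Perm (Fin 6)) : Set VB := {Sum.inl (σ, 0), Sum.inl (σ, 1)}

/-- The high linked pair of a gadget. -/
def highB (σ : Equiv.Perm (Fin 6)) : Set VB := {Sum.inl (σ, 2), Sum.inl (σ, 3)}

/-- The `E₂`-equivalence on (ranges of) pairs. -/
def pairRelB (P Q : Set VB) : Prop :=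
  P = Q ∨ ∃ σ, (P = lowB σ ∧ Q = highB σ) ∨ (P = highB σ ∧ Q = lowB σ)

/-- The interpretation of `E_n` on `VB`. -/
def eRelVB (n : ℕ) (x y : Fin n → VB) : Prop :=
  Function.Injective x ∧ Function.Injective y ∧
    (if h : n = 1 then clsB (x ⟨0, by omega⟩) = clsB (y ⟨0, by omega⟩)
     else if n = 2 then pairRelB (Set.range x) (Set.range y)
     else True)

instance instVB : L₀.Structure VB where
  funMap := fun f => f.elim
  RelMap := fun {k} R v =>
    eRelVB R.1 (fun i => v (Fin.cast R.2.2.symm (Fin.castAdd R.1 i)))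
               (fun i => v (Fin.cast R.2.2.symm (Fin.natAdd R.1 i)))

lemma eRel_VB (n : ℕ) (hn : 0 < n) (x y : Fin n → VB) :
    ERel VB n hn x y ↔ eRelVB n x y := by
  have h1 : (fun i => Fin.append x y (Fin.cast rfl (Fin.castAdd n i))) = x :=
    funext fun i => Fin.append_left x y i
  have h2 : (fun i => Fin.append x y (Fin.cast rfl (Fin.natAdd n i))) = y :=
    funext fun i => Fin.append_right x y i
  show eRelVB n (fun i => Fin.append x y (Fin.cast rfl (Fin.castAdd n i)))
      (fun i => Fin.append x y (Fin.cast rfl (Fin.natAdd n i))) ↔ _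
  rw [h1, h2]

lemma lowB_ne_highB (σ τ : Equiv.Perm (Fin 6)) : lowB σ ≠ highB τ := by
  intro h
  have : (Sum.inl (σ, 0) : VB) ∈ highB τ := h ▸ (by left; rfl)
  rcases this with h' | h' <;> simp_all

lemma lowB_inj {σ τ : Equiv.Perm (Fin 6)} (h : lowB σ = lowB τ) : σ = τ := by
  have : (Sum.inl (σ, 0) : VB) ∈ lowB τ := h ▸ (by left; rfl)
  rcases this with h' | h' <;> simp_all

lemma highB_inj {σ τ : Equiv.Perm (Fin 6)} (h : highB σ = highB τ) : σ = τ := by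
  have : (Sum.inl (σ, 2) : VB) ∈ highB τ := h ▸ (by left; rfl)
  rcases this with h' | h' <;> simp_all

lemma pairRelB_symm {P Q : Set VB} (h : pairRelB P Q) : pairRelB Q P := by
  rcases h with rfl | ⟨σ, ⟨h1, h2⟩ | ⟨h1, h2⟩⟩
  · exact Or.inl rfl
  · exact Or.inr ⟨σ, Or.inr ⟨h2, h1⟩⟩
  · exact Or.inr ⟨σ, Or.inl ⟨h2, h1⟩⟩

lemma pairRelB_trans {P Q R : Set VB} (h1 : pairRelB P Q) (h2 : pairRelB Q R) :
    pairRelB P R := by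
  rcases h1 with rfl | ⟨σ, ⟨hp, hq⟩ | ⟨hp, hq⟩⟩
  · exact h2
  · rcases h2 with rfl | ⟨τ, ⟨hq', hr⟩ | ⟨hq', hr⟩⟩
    · exact Or.inr ⟨σ, Or.inl ⟨hp, hq⟩⟩
    · exact absurd (hq'.symm.trans hq) (lowB_ne_highB τ σ)
    · have : σ = τ := highB_inj (hq.symm.trans hq')
      exact Or.inl (by rw [hp, hr, this])
  · rcases h2 with rfl | ⟨τ, ⟨hq', hr⟩ | ⟨hq', hr⟩⟩
    · exact Or.inr ⟨σ, Or.inr ⟨hp, hq⟩⟩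
    · have : σ = τ := lowB_inj (hq.symm.trans hq')
      exact Or.inl (by rw [hp, hr, this])
    · exact absurd (hq.symm.trans hq') (lowB_ne_highB σ τ)

lemma isK0_VB : IsK0Struct VB := by
  intro n hn
  refine ⟨?_, ?_, ?_, ?_, ?_⟩
  · intro x y h
    rw [eRel_VB] at h
    exact ⟨h.1, h.2.1⟩
  · intro x y σ τ h
    rw [eRel_VB] at h ⊢
    obtain ⟨h1, h2, h3⟩ := h
    refine ⟨h1.comp σ.injective, h2.comp τ.injective, ?_⟩
    split_ifs at h3 ⊢ with e1 e2
    · subst e1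
      show clsB (x (σ ⟨0, by omega⟩)) = clsB (y (τ ⟨0, by omega⟩))
      rw [Subsingleton.elim (σ ⟨0, by omega⟩) ⟨0, by omega⟩,
        Subsingleton.elim (τ ⟨0, by omega⟩) ⟨0, by omega⟩]
      exact h3
    · rwa [σ.surjective.range_comp x, τ.surjective.range_comp y]
  · intro x hx
    rw [eRel_VB]
    refine ⟨hx, hx, ?_⟩
    split_ifs
    · rfl
    · exact Or.inl rfl
  · intro x y h
    rw [eRel_VB] at h ⊢
    obtain ⟨h1, h2, h3⟩ := h
    refine ⟨h2, h1, ?_⟩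
    split_ifs at h3 ⊢
    · exact h3.symm
    · exact pairRelB_symm h3
  · intro x y z h h'
    rw [eRel_VB] at h h' ⊢
    obtain ⟨h1, h2, h3⟩ := h
    obtain ⟨h1', h2', h3'⟩ := h'
    refine ⟨h1, h2', ?_⟩
    split_ifs at h3 h3' ⊢
    · exact h3.trans h3'
    · exact pairRelB_trans h3 h3'

/-- The auxiliary structure, bundled. -/
def CB : Bundled L₀.Structure := ⟨VB, instVB⟩

lemma CB_mem_K₀ : CB ∈ K₀ :=
  ⟨inferInstanceAs (Finite VB), isK0_VB⟩

/-- Any strict total order on a six-element type admits a monotone enumeration. -/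
lemma exists_monotone_enum {α : Type} [Fintype α] (s : α → α → Prop)
    [IsStrictTotalOrder α s] (hcard : Fintype.card α = 6) :
    ∃ π : Fin 6 → α, Function.Bijective π ∧ ∀ i j : Fin 6, i < j → s (π i) (π j) := by
  classical
  letI lin : LinearOrder α := linearOrderOfSTO s
  let e := monoEquivOfFin α hcard
  exact ⟨e, e.bijective, fun i j h => e.strictMono h⟩

/-- Injectivity of a pair tuple. -/
lemma inj_pair {α : Type*} {a b : α} (h : a ≠ b) : Function.Injective ![a, b] := by
  intro i j hij
  fin_cases i <;> fin_cases j <;> simp_all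

/-- if `<` is a strict linear order on `M₀` making `(M₀, <)` ultrahomogeneous
and every `E₁`-class is convex, then the six-element ordered structure
`B = {a₁ < a₂ < a₃ < a₄ < b₁ < b₂}` described below embeds into `(M₀, <)`. -/
theorem M0_B_embeds (M₀ : Type) [L₀.Structure M₀] [Countable M₀]
    (hUH : L₀.IsUltrahomogeneous M₀) (hage : L₀.age M₀ = K₀)
    (r : M₀ → M₀ → Prop) (hr : IsStrictTotalOrder M₀ r)
    (hUH' : @Language.IsUltrahomogeneous L₀lt M₀ (expStr M₀ r))
    (hconv : ∀ a b c : M₀, r a b → r b c → ERel M₀ 1 one_pos (fun _ => a) (fun _ => c) →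
        ERel M₀ 1 one_pos (fun _ => a) (fun _ => b)) :
    ∃ a₁ a₂ a₃ a₄ b₁ b₂ : M₀,
      r a₁ a₂ ∧ r a₂ a₃ ∧ r a₃ a₄ ∧ r a₄ b₁ ∧ r b₁ b₂ ∧
      -- all six elements lie in pairwise distinct E₁-classes
      (∀ u v : M₀, u ∈ ({a₁, a₂, a₃, a₄, b₁, b₂} : Set M₀) →
          v ∈ ({a₁, a₂, a₃, a₄, b₁, b₂} : Set M₀) → u ≠ v →
          ¬ ERel M₀ 1 one_pos (fun _ => u) (fun _ => v)) ∧
      -- the pairs {a₁, a₂} and {b₁, b₂} are E₂-equivalent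
      ERel M₀ 2 two_pos ![a₁, a₂] ![b₁, b₂] ∧
      -- all other pairs of distinct two-element subsets of B are E₂-inequivalent
      (∀ x y : Fin 2 → M₀, Function.Injective x → Function.Injective y →
          Set.range x ⊆ ({a₁, a₂, a₃, a₄, b₁, b₂} : Set M₀) →
          Set.range y ⊆ ({a₁, a₂, a₃, a₄, b₁, b₂} : Set M₀) →
          Set.range x ≠ Set.range y →
          ¬ (Set.range x = ({a₁, a₂} : Set M₀) ∧ Set.range y = ({b₁, b₂} : Set M₀)) →
          ¬ (Set.range x = ({b₁, b₂} : Set M₀) ∧ Set.range y = ({a₁, a₂} : Set M₀)) →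
          ¬ ERel M₀ 2 two_pos x y) ∧
      -- for k ∈ {3, 4, 5} all k-element subsets of B are E_k-equivalent
      (∀ (k : ℕ) (hk : 0 < k), k = 3 ∨ k = 4 ∨ k = 5 →
          ∀ x y : Fin k → M₀, Function.Injective x → Function.Injective y →
            Set.range x ⊆ ({a₁, a₂, a₃, a₄, b₁, b₂} : Set M₀) →
            Set.range y ⊆ ({a₁, a₂, a₃, a₄, b₁, b₂} : Set M₀) →
            ERel M₀ k hk x y) := by
  classical
  haveI := hr
  have hmem : CB ∈ L₀.age M₀ := by rw [hage]; exact CB_mem_K₀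
  obtain ⟨-, ⟨f⟩⟩ := hmem
  -- transfer of the relations along the embedding
  have hmap : ∀ (n : ℕ) (hn : 0 < n) (x y : Fin n → VB),
      ERel M₀ n hn (⇑f ∘ x) (⇑f ∘ y) ↔ eRelVB n x y := by
    intro n hn x y
    have happ : Fin.append (⇑f ∘ x) (⇑f ∘ y) = ⇑f ∘ Fin.append x y := by
      funext i
      refine Fin.addCases (fun j => ?_) (fun j => ?_) i
      · exact (Fin.append_left (⇑f ∘ x) (⇑f ∘ y) j).trans
          (congrArg f (Fin.append_left x y j)).symm
      · exact (Fin.append_right (⇑f ∘ x) (⇑f ∘ y) j).trans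
          (congrArg f (Fin.append_right x y j)).symm
    rw [← eRel_VB n hn x y]
    unfold ERel
    rw [happ]
    exact f.map_rel _ _
  have hE1 : ∀ a b : VB,
      ERel M₀ 1 one_pos (fun _ => f a) (fun _ => f b) ↔ clsB a = clsB b := by
    intro a b
    rw [show (fun _ : Fin 1 => f a) = ⇑f ∘ (fun _ => a) from rfl,
      show (fun _ : Fin 1 => f b) = ⇑f ∘ (fun _ => b) from rfl, hmap]
    unfold eRelVB
    constructor
    · rintro ⟨-, -, h⟩
      simpa using h
    · intro h
      exact ⟨fun i j _ => Subsingleton.elim i j, fun i j _ => Subsingleton.elim i j,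
        by simpa using h⟩
  have convV : ∀ a b c : VB, r (f a) (f b) → r (f b) (f c) → clsB a = clsB c →
      clsB a = clsB b := fun a b c h1 h2 h3 =>
    (hE1 a b).1 (hconv _ _ _ h1 h2 ((hE1 a c).2 h3))
  have tri : ∀ a b : VB, r (f a) (f b) ∨ a = b ∨ r (f b) (f a) := by
    intro a b
    rcases trichotomous_of r (f a) (f b) with h | h | h
    · exact Or.inl h
    · exact Or.inr (Or.inl (f.injective h))
    · exact Or.inr (Or.inr h)
  have side1 : ∀ a b b' : VB, clsB b = clsB b' → clsB a ≠ clsB b →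
      r (f a) (f b) → r (f a) (f b') := by
    intro a b b' hbb hab h
    rcases tri a b' with h' | rfl | h'
    · exact h'
    · exact absurd hbb.symm hab
    · exact absurd ((convV b' a b h' h hbb.symm).symm.trans hbb.symm) hab
  have side2 : ∀ a a' b : VB, clsB a = clsB a' → clsB a ≠ clsB b →
      r (f a) (f b) → r (f a') (f b) := by
    intro a a' b haa hab h
    rcases tri a' b with h' | rfl | h'
    · exact h'
    · exact absurd haa hab
    · exact absurd (convV a b a' h h' haa) hab
  have hclass : ∀ a b : VB, clsB a ≠ clsB b →
      (r (f a) (f b) ↔ r (f (Sum.inr (clsB a))) (f (Sum.inr (clsB b)))) := by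
    intro a b hab
    constructor
    · intro h
      exact side2 a (Sum.inr (clsB a)) (Sum.inr (clsB b)) rfl hab
        (side1 a b (Sum.inr (clsB b)) rfl hab h)
    · intro h
      exact side2 (Sum.inr (clsB a)) a b rfl hab
        (side1 (Sum.inr (clsB a)) (Sum.inr (clsB b)) b rfl hab h)
  -- the induced strict total order on the six classes
  let s : Fin 6 → Fin 6 → Prop := fun i j => r (f (Sum.inr i)) (f (Sum.inr j))
  haveI : IsTrichotomous (Fin 6) s := ⟨fun i j hij hji => by
    rcases tri (Sum.inr i) (Sum.inr j) with h | h | h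
    · exact absurd h hij
    · exact Sum.inr.inj h
    · exact absurd h hji⟩
  haveI : IsTrans (Fin 6) s := ⟨fun i j k h1 h2 => trans_of r h1 h2⟩
  haveI : IsIrrefl (Fin 6) s := ⟨fun i => irrefl_of r _⟩
  haveI : IsStrictOrder (Fin 6) s := ⟨⟩
  haveI : IsStrictTotalOrder (Fin 6) s := ⟨⟩
  obtain ⟨π, hbij, hmono⟩ := exists_monotone_enum s (by simp)
  have πinj : Function.Injective π := hbij.1
  let σ : Equiv.Perm (Fin 6) := Equiv.ofBijective π hbij
  have c1 : clsB (Sum.inl (σ, 0)) = π 0 := rfl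
  have c2 : clsB (Sum.inl (σ, 1)) = π 1 := rfl
  have c3 : clsB (Sum.inr (π 2) : VB) = π 2 := rfl
  have c4 : clsB (Sum.inr (π 3) : VB) = π 3 := rfl
  have c5 : clsB (Sum.inl (σ, 2)) = π 4 := rfl
  have c6 : clsB (Sum.inl (σ, 3)) = π 5 := rfl
  have key : ∀ (u v : VB) (i j : Fin 6), clsB u = π i → clsB v = π j → i < j →
      r (f u) (f v) := by
    intro u v i j hu hv hij
    have hne : clsB u ≠ clsB v := by
      rw [hu, hv]
      exact fun e => absurd (πinj e) (ne_of_lt hij)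
    rw [hclass u v hne]
    have hu' : (Sum.inr (clsB u) : VB) = Sum.inr (π i) := by rw [hu]
    have hv' : (Sum.inr (clsB v) : VB) = Sum.inr (π j) := by rw [hv]
    rw [hu', hv']
    exact hmono i j hij
  have hsix : ∀ u : M₀,
      u ∈ ({f (Sum.inl (σ, 0)), f (Sum.inl (σ, 1)), f (Sum.inr (π 2)), f (Sum.inr (π 3)),
        f (Sum.inl (σ, 2)), f (Sum.inl (σ, 3))} : Set M₀) →
      ∃ v : VB, (v = Sum.inl (σ, 0) ∨ v = Sum.inl (σ, 1) ∨ v = Sum.inr (π 2) ∨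
        v = Sum.inr (π 3) ∨ v = Sum.inl (σ, 2) ∨ v = Sum.inl (σ, 3)) ∧ u = f v := by
    intro u hu
    simp only [Set.mem_insert_iff, Set.mem_singleton_iff] at hu
    rcases hu with h | h | h | h | h | h
    exacts [⟨_, Or.inl rfl, h⟩, ⟨_, Or.inr (Or.inl rfl), h⟩,
      ⟨_, Or.inr (Or.inr (Or.inl rfl)), h⟩, ⟨_, Or.inr (Or.inr (Or.inr (Or.inl rfl))), h⟩,
      ⟨_, Or.inr (Or.inr (Or.inr (Or.inr (Or.inl rfl)))), h⟩,
      ⟨_, Or.inr (Or.inr (Or.inr (Or.inr (Or.inr rfl)))), h⟩]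
  refine ⟨f (Sum.inl (σ, 0)), f (Sum.inl (σ, 1)), f (Sum.inr (π 2)), f (Sum.inr (π 3)),
    f (Sum.inl (σ, 2)), f (Sum.inl (σ, 3)),
    key _ _ 0 1 c1 c2 (by decide), key _ _ 1 2 c2 c3 (by decide),
    key _ _ 2 3 c3 c4 (by decide), key _ _ 3 4 c4 c5 (by decide),
    key _ _ 4 5 c5 c6 (by decide), ?_, ?_, ?_, ?_⟩
  · -- pairwise distinct E₁-classes
    have hclsne : ∀ v w : VB,
        (v = Sum.inl (σ, 0) ∨ v = Sum.inl (σ, 1) ∨ v = Sum.inr (π 2) ∨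
          v = Sum.inr (π 3) ∨ v = Sum.inl (σ, 2) ∨ v = Sum.inl (σ, 3)) →
        (w = Sum.inl (σ, 0) ∨ w = Sum.inl (σ, 1) ∨ w = Sum.inr (π 2) ∨
          w = Sum.inr (π 3) ∨ w = Sum.inl (σ, 2) ∨ w = Sum.inl (σ, 3)) →
        v ≠ w → clsB v ≠ clsB w := by
      intro v w hv hw hvw
      rcases hv with rfl | rfl | rfl | rfl | rfl | rfl <;>
        rcases hw with rfl | rfl | rfl | rfl | rfl | rfl <;>
        first
          | exact absurd rfl hvw
          | (simp only [c1, c2, c3, c4, c5, c6]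
             exact fun e => absurd (πinj e) (by decide))
    intro u v hu hv huv
    obtain ⟨p, hp, rfl⟩ := hsix u hu
    obtain ⟨q, hq, rfl⟩ := hsix v hv
    exact fun h => hclsne p q hp hq (fun e => huv (congrArg f e)) ((hE1 p q).1 h)
  · -- {a₁, a₂} E₂ {b₁, b₂}
    rw [show ![f (Sum.inl (σ, 0)), f (Sum.inl (σ, 1))]
        = ⇑f ∘ ![Sum.inl (σ, 0), Sum.inl (σ, 1)] from by funext i; fin_cases i <;> rfl,
      show ![f (Sum.inl (σ, 2)), f (Sum.inl (σ, 3))]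
        = ⇑f ∘ ![Sum.inl (σ, 2), Sum.inl (σ, 3)] from by funext i; fin_cases i <;> rfl]
    refine (hmap 2 two_pos _ _).2 ?_
    unfold eRelVB
    refine ⟨inj_pair (by simp), inj_pair (by simp), ?_⟩
    rw [dif_neg (by omega : ¬(2 : ℕ) = 1), if_pos rfl]
    refine Or.inr ⟨σ, Or.inl ⟨?_, ?_⟩⟩
    · exact Matrix.range_cons_cons_empty _ _ _
    · exact Matrix.range_cons_cons_empty _ _ _
  · -- all other pairs are E₂-inequivalent
    intro x y hxinj hyinj hxr hyr hne hs1 hs2 hER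
    choose vx hvx hfx using fun i => hsix (x i) (hxr ⟨i, rfl⟩)
    choose vy hvy hfy using fun i => hsix (y i) (hyr ⟨i, rfl⟩)
    have hxe : x = ⇑f ∘ vx := funext hfx
    have hye : y = ⇑f ∘ vy := funext hfy
    rw [hxe, hye, hmap] at hER
    obtain ⟨hvxi, hvyi, hp⟩ := hER
    rw [dif_neg (by omega : ¬(2 : ℕ) = 1), if_pos rfl] at hp
    rcases hp with heq | ⟨τ, ⟨hl, hh⟩ | ⟨hl, hh⟩⟩
    · exact hne (by rw [hxe, hye]; exact (Set.range_comp (⇑f) vx).trans ((congrArg (fun S => (⇑f) '' S) heq).trans (Set.range_comp (⇑f) vy).symm))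
    · have hmem : Sum.inl (τ, (0 : Fin 4)) ∈ Set.range vx := by
        rw [hl]; exact Or.inl rfl
      obtain ⟨i, hi⟩ := hmem
      have hd := hvx i
      rw [hi] at hd
      have hτ : τ = σ := by
        rcases hd with h | h | h | h | h | h <;>
          first
            | exact congrArg Prod.fst (Sum.inl.inj h)
            | exact (Sum.inl_ne_inr h).elim
      subst hτ
      refine hs1 ⟨?_, ?_⟩
      · erw [hxe, Set.range_comp, hl]
        exact Set.image_pair f _ _
      · erw [hye, Set.range_comp, hh]
        exact Set.image_pair f _ _
    · have hmem : Sum.inl (τ, (2 : Fin 4)) ∈ Set.range vx := by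
        rw [hl]; exact Or.inl rfl
      obtain ⟨i, hi⟩ := hmem
      have hd := hvx i
      rw [hi] at hd
      have hτ : τ = σ := by
        rcases hd with h | h | h | h | h | h <;>
          first
            | exact congrArg Prod.fst (Sum.inl.inj h)
            | exact (Sum.inl_ne_inr h).elim
      subst hτ
      refine hs2 ⟨?_, ?_⟩
      · erw [hxe, Set.range_comp, hl]
        exact Set.image_pair f _ _
      · erw [hye, Set.range_comp, hh]
        exact Set.image_pair f _ _
  · -- E_k for k = 3, 4, 5
    intro k hk h35 x y hxinj hyinj hxr hyr
    choose vx hvx hfx using fun i => hsix (x i) (hxr ⟨i, rfl⟩)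
    choose vy hvy hfy using fun i => hsix (y i) (hyr ⟨i, rfl⟩)
    have hvxi : Function.Injective vx := fun i j h => hxinj (by rw [hfx i, hfx j, h])
    have hvyi : Function.Injective vy := fun i j h => hyinj (by rw [hfy i, hfy j, h])
    rw [show x = ⇑f ∘ vx from funext hfx, show y = ⇑f ∘ vy from funext hfy, hmap]
    exact ⟨hvxi, hvyi, by rcases h35 with rfl | rfl | rfl <;> simp⟩
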